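/- Let X be a nonnegative random variable with Laplace transform L_X(s) = E[exp(-sX)], and let λ > 0 satisfy R₀ := λ·E[X] > 1. Then the equation 1 - p = L_X(λp) has a unique solution p in the open interval (0,1). -/

import Mathlib

open MeasureTheory Set Filter

private lemma exp_integrable {Ω : Type*} [MeasurableSpace Ω] (μ : Measure Ω)
    [IsProbabilityMeasure μ] (X : Ω → ℝ) (hXmeas : Measurable X) (hXpos : ∀ ω, 0 ≤ X ω)
    {c : ℝ} (hc : 0 ≤ c) :
    Integrable (fun ω => Real.exp (-c * X ω)) μ := by
  apply Integrable.mono' (integrable_const (1 : ℝ))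
  · exact (Real.measurable_exp.comp (hXmeas.const_mul (-c))).aestronglyMeasurable
  · filter_upwards with ω
    rw [Real.norm_eq_abs, abs_of_pos (Real.exp_pos _)]
    exact Real.exp_le_one_iff.mpr (by nlinarith [hXpos ω])

theorem outbreak_prob_unique
    {Ω : Type*} [MeasurableSpace Ω] (μ : Measure Ω) [IsProbabilityMeasure μ]
    (X : Ω → ℝ) (hXmeas : Measurable X) (hXpos : ∀ ω, 0 ≤ X ω)
    (hXint : Integrable X μ)
    (lam : ℝ) (hlam : 0 < lam) (hR0 : 1 < lam * ∫ ω, X ω ∂μ) :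
    ∃! p : ℝ, p ∈ Ioo (0:ℝ) 1 ∧ 1 - p = ∫ ω, Real.exp (-(lam * p) * X ω) ∂μ := by
  have hInteg : ∀ p : ℝ, 0 ≤ p → Integrable (fun ω => Real.exp (-(lam * p) * X ω)) μ := by
    intro p hp
    exact exp_integrable μ X hXmeas hXpos (by positivity)
  -- support of X has positive measure
  have hIpos : 0 < ∫ ω, X ω ∂μ := by nlinarith
  have hsupp : 0 < μ (Function.support X) :=
    (integral_pos_iff_support_of_nonneg (fun ω => hXpos ω) hXint).mp hIpos
  -- Uniqueness helper: no two distinct roots with 0 < p₁ < p₂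
  have uniq : ∀ p₁ p₂ : ℝ, 0 < p₁ → p₁ < p₂ →
      1 - p₁ = ∫ ω, Real.exp (-(lam * p₁) * X ω) ∂μ →
      1 - p₂ = ∫ ω, Real.exp (-(lam * p₂) * X ω) ∂μ → False := by
    intro p₁ p₂ hp₁ h12 e1 e2
    have hp₂ : 0 < p₂ := hp₁.trans h12
    set a : ℝ := p₁ / p₂ with ha
    have ha0 : 0 < a := by positivity
    have ha1 : a < 1 := (div_lt_one hp₂).mpr h12
    set h : Ω → ℝ := fun ω =>
      a * Real.exp (-(lam * p₂) * X ω) + (1 - a) - Real.exp (-(lam * p₁) * X ω) with hh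
    have harg : ∀ ω, -(lam * p₁) * X ω = a * (-(lam * p₂) * X ω) + (1 - a) * 0 := by
      intro ω
      field_simp [ha]
      have e : p₁ / p₂ * p₂ = p₁ := div_mul_cancel₀ _ hp₂.ne'
      rw [ha]; linear_combination (lam * X ω) * e
    have hnonneg : ∀ ω, 0 ≤ h ω := by
      intro ω
      have := convexOn_exp.2 (mem_univ (-(lam * p₂) * X ω)) (mem_univ (0:ℝ))
        ha0.le (by linarith : (0:ℝ) ≤ 1 - a) (by ring)
      simp only [smul_eq_mul, Real.exp_zero, mul_one] at this
      rw [← harg ω] at this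
      simp only [hh]
      linarith
    have hstrict : ∀ ω, 0 < X ω → 0 < h ω := by
      intro ω hx
      have hne : -(lam * p₂) * X ω ≠ (0:ℝ) := by
        intro hc; nlinarith [mul_pos (mul_pos hlam hp₂) hx]
      have := strictConvexOn_exp.2 (mem_univ (-(lam * p₂) * X ω)) (mem_univ (0:ℝ))
        hne ha0 (by linarith : (0:ℝ) < 1 - a) (by ring)
      simp only [smul_eq_mul, Real.exp_zero, mul_one] at this
      rw [← harg ω] at this
      simp only [hh]
      linarith
    have hInt1 := hInteg p₁ hp₁.le
    have hInt2 := hInteg p₂ hp₂.le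
    have hInt2' : Integrable (fun ω => a * Real.exp (-(lam * p₂) * X ω) + (1 - a)) μ :=
      (hInt2.const_mul a).add (integrable_const (1 - a))
    have hhint : Integrable h μ := hInt2'.sub hInt1
    have hintzero : ∫ ω, h ω ∂μ = 0 := by
      simp only [hh]
      rw [integral_sub hInt2' hInt1,
        integral_add (hInt2.const_mul a) (integrable_const (1 - a)),
        integral_const_mul, integral_const, ← e1, ← e2]
      simp only [measure_univ, probReal_univ, ENNReal.toReal_one, smul_eq_mul, one_mul]
      have hap : a * p₂ = p₁ := by rw [ha]; field_simp
      linear_combination -hap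
    have hpos : 0 < ∫ ω, h ω ∂μ := by
      rw [integral_pos_iff_support_of_nonneg hnonneg hhint]
      refine lt_of_lt_of_le hsupp (measure_mono ?_)
      intro ω hω
      have hx : 0 < X ω := lt_of_le_of_ne (hXpos ω) (Ne.symm hω)
      exact ne_of_gt (hstrict ω hx)
    linarith
  -- Step 1: limit of ∫ (1 - exp)/p as p → 0⁺ is lam * E[X]
  have key : Tendsto (fun p : ℝ => ∫ ω, (1 - Real.exp (-(lam * p) * X ω)) / p ∂μ)
      (nhdsWithin 0 (Ioi 0)) (nhds (∫ ω, lam * X ω ∂μ)) := by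
    apply tendsto_integral_filter_of_dominated_convergence (fun ω => lam * X ω)
    · filter_upwards with p
      exact (((Real.measurable_exp.comp (hXmeas.const_mul (-(lam*p)))).const_sub 1).div_const
        p).aestronglyMeasurable
    · filter_upwards [self_mem_nhdsWithin] with p (hp : 0 < p)
      filter_upwards with ω
      have ht : 0 ≤ lam * p * X ω := mul_nonneg (mul_nonneg hlam.le hp.le) (hXpos ω)
      have h1 : Real.exp (-(lam * p) * X ω) ≤ 1 :=
        Real.exp_le_one_iff.mpr (by nlinarith)
      have h2 : 1 - lam * p * X ω ≤ Real.exp (-(lam * p) * X ω) := by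
        have := Real.add_one_le_exp (-(lam * p) * X ω); nlinarith
      rw [Real.norm_eq_abs, abs_of_nonneg (div_nonneg (by linarith) hp.le), div_le_iff₀ hp]
      nlinarith
    · exact hXint.const_mul lam
    · filter_upwards with ω
      have hderiv : HasDerivAt (fun p : ℝ => 1 - Real.exp (-(lam * X ω) * p)) (lam * X ω) 0 := by
        have h1 : HasDerivAt (fun p : ℝ => -(lam * X ω) * p) (-(lam * X ω)) 0 := by
          simpa using (hasDerivAt_id (0:ℝ)).const_mul (-(lam * X ω))
        have h2 := h1.exp
        have h3 := h2.const_sub 1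
        simpa using h3
      have t1 := hasDerivAt_iff_tendsto_slope.mp hderiv
      have t2 := t1.mono_left (nhdsWithin_mono _ (fun x hx => by
        simp only [mem_compl_iff, mem_singleton_iff]; exact ne_of_gt hx))
      apply t2.congr
      intro p
      rw [slope_def_field]
      simp only [div_sub_div_same, sub_zero, mul_zero, Real.exp_zero]
      ring_nf
  rw [integral_const_mul] at key
  -- find p₀ ∈ (0,1) with G p₀ < 1 - p₀
  have hev : ∀ᶠ p in nhdsWithin (0:ℝ) (Ioi 0),
      (1 < ∫ ω, (1 - Real.exp (-(lam * p) * X ω)) / p ∂μ) ∧ p < 1 ∧ p ∈ Ioi (0:ℝ) := by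
    refine (key.eventually (eventually_gt_nhds hR0)).and (Eventually.and ?_ self_mem_nhdsWithin)
    exact eventually_nhdsWithin_of_eventually_nhds (eventually_lt_nhds one_pos)
  obtain ⟨p₀, hp₀big, hp₀lt1, hp₀pos⟩ := hev.exists
  simp only [mem_Ioi] at hp₀pos
  have hGp₀ : (∫ ω, Real.exp (-(lam * p₀) * X ω) ∂μ) < 1 - p₀ := by
    have hrw : (∫ ω, (1 - Real.exp (-(lam * p₀) * X ω)) / p₀ ∂μ)
        = (1 - ∫ ω, Real.exp (-(lam * p₀) * X ω) ∂μ) / p₀ := by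
      rw [integral_div, integral_sub (integrable_const 1) (hInteg p₀ hp₀pos.le),
        integral_const]
      simp
    rw [hrw, lt_div_iff₀ hp₀pos, one_mul] at hp₀big
    linarith
  -- IVT on [p₀, 1] for f p = 1 - p - G p
  set f : ℝ → ℝ := fun p => 1 - p - ∫ ω, Real.exp (-(lam * p) * X ω) ∂μ with hf
  have hcont : ContinuousOn f (Icc p₀ 1) := by
    have hG : ∀ q ∈ Icc p₀ 1, ContinuousAt
        (fun p : ℝ => ∫ ω, Real.exp (-(lam * p) * X ω) ∂μ) q := by
      intro q hq
      have hq0 : 0 < q := lt_of_lt_of_le hp₀pos hq.1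
      apply continuousAt_of_dominated (bound := fun _ => (1:ℝ))
      · filter_upwards with p
        exact (Real.measurable_exp.comp (hXmeas.const_mul (-(lam*p)))).aestronglyMeasurable
      · filter_upwards [eventually_gt_nhds hq0] with p hp
        filter_upwards with ω
        rw [Real.norm_eq_abs, abs_of_pos (Real.exp_pos _)]
        exact Real.exp_le_one_iff.mpr
          (by nlinarith [mul_nonneg (mul_nonneg hlam.le hp.le) (hXpos ω)])
      · exact integrable_const 1
      · filter_upwards with ω
        exact (Real.continuous_exp.comp (((continuous_const.mul continuous_id).neg).mul
          continuous_const)).continuousAt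
    intro q hq
    exact ((continuous_const.sub continuous_id).continuousAt.sub (hG q hq)).continuousWithinAt
  have hf1 : f 1 < 0 := by
    have : 0 < ∫ ω, Real.exp (-(lam * 1) * X ω) ∂μ :=
      integral_exp_pos (hInteg 1 one_pos.le)
    simp only [hf]
    linarith
  have hfp₀ : 0 < f p₀ := by simp only [hf]; linarith
  have hmem : (0:ℝ) ∈ Ioo (f 1) (f p₀) := ⟨hf1, hfp₀⟩
  obtain ⟨p, hpmem, hpzero⟩ := intermediate_value_Ioo' hp₀lt1.le hcont hmem
  refine ⟨p, ⟨⟨lt_trans hp₀pos hpmem.1, hpmem.2⟩, ?_⟩, ?_⟩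
  · simp only [hf] at hpzero; linarith
  · rintro q ⟨hqmem, hqeq⟩
    have hpeq : 1 - p = ∫ ω, Real.exp (-(lam * p) * X ω) ∂μ := by
      simp only [hf] at hpzero; linarith
    rcases lt_trichotomy q p with h | h | h
    · exact absurd (uniq q p hqmem.1 h hqeq hpeq) id
    · exact h
    · exact absurd (uniq p q (lt_trans hp₀pos hpmem.1) h hpeq hqeq) id
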